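/- Let U be a smooth manifold, ζ a smooth vector field on U, and let G^ζ be the set of smooth one-forms W on U such that W(ζ)(p) > −1 for every p ∈ U. Define W²·W¹ := W² + (1 + W²(ζ))·W¹. Then: (i) for W¹, W² ∈ G^ζ one has 1 + (W²·W¹)(ζ) = (1 + W²(ζ))(1 + W¹(ζ)) pointwise, so W²·W¹ ∈ G^ζ; (ii) the operation · is associative on G^ζ; (iii) the zero one-form is a two-sided identity; (iv) every W ∈ G^ζ has the two-sided inverse −(1 + W(ζ))⁻¹·W, which lies in G^ζ. Hence (G^ζ, ·) is a group. -/

import Mathlib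

open Bundle
open scoped Manifold

section

variable {E : Type*} [NormedAddCommGroup E] [NormedSpace ℝ E]
  {H : Type*} [TopologicalSpace H] (I : ModelWithCorners ℝ E H)
  {M : Type*} [TopologicalSpace M] [ChartedSpace H M] [IsManifold I ((⊤ : ℕ∞) : WithTop ℕ∞) M]

/-- A vector field is smooth if it is a smooth section of the tangent bundle. -/
def IsSmoothVectorField (ζ : ∀ x : M, TangentSpace I x) : Prop :=
  ContMDiff I I.tangent (⊤ : ℕ∞) (fun x => (⟨x, ζ x⟩ : TangentBundle I M))

/-- A one-form is smooth if it is a smooth section of the bundle of continuous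
linear maps from the tangent bundle to the trivial real line bundle. -/
def IsSmoothOneForm (ω : ∀ x : M, TangentSpace I x →L[ℝ] ℝ) : Prop :=
  ContMDiff I (I.prod 𝓘(ℝ, E →L[ℝ] ℝ)) (⊤ : ℕ∞)
    (fun x => (⟨x, ω x⟩ : TotalSpace (E →L[ℝ] ℝ)
      (fun x : M => TangentSpace I x →SL[RingHom.id ℝ] Bundle.Trivial M ℝ x)))

/-- The product `W²·W¹ := W² + (1 + W²(ζ))·W¹` of one-forms relative to the vector
field `ζ`. -/
noncomputable def oneFormMul (ζ : ∀ x : M, TangentSpace I x)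
    (W2 W1 : ∀ x : M, TangentSpace I x →L[ℝ] ℝ) :
    ∀ x : M, TangentSpace I x →L[ℝ] ℝ :=
  fun x => W2 x + (1 + W2 x (ζ x)) • W1 x

lemma isSmoothOneForm_iff (ω : ∀ x : M, TangentSpace I x →L[ℝ] ℝ) :
    IsSmoothOneForm I ω ↔ ∀ x₀ : M, ContMDiffAt I 𝓘(ℝ, E →L[ℝ] ℝ) (⊤ : ℕ∞)
      (fun x => ContinuousLinearMap.inCoordinates E (TangentSpace I) ℝ (Bundle.Trivial M ℝ)
        x₀ x x₀ x (ω x)) x₀ := by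
  constructor
  · intro h x₀
    exact ((contMDiffAt_hom_bundle _).1 (h x₀)).2
  · intro h x₀
    exact (contMDiffAt_hom_bundle _).2 ⟨contMDiffAt_id, h x₀⟩

lemma inCoordinates_add_smul (x₀ x : M) (f : ℝ) (φ ψ : TangentSpace I x →L[ℝ] ℝ) :
    ContinuousLinearMap.inCoordinates E (TangentSpace I) ℝ (Bundle.Trivial M ℝ) x₀ x x₀ x
        (ψ + f • φ) =
      ContinuousLinearMap.inCoordinates E (TangentSpace I) ℝ (Bundle.Trivial M ℝ) x₀ x x₀ x ψ +
        f • ContinuousLinearMap.inCoordinates E (TangentSpace I) ℝ (Bundle.Trivial M ℝ)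
          x₀ x x₀ x φ := by
  simp [ContinuousLinearMap.inCoordinates, ContinuousLinearMap.add_comp,
    ContinuousLinearMap.comp_add, ContinuousLinearMap.smul_comp, ContinuousLinearMap.comp_smul]

lemma IsSmoothOneForm.add_smul {W1 W2 : ∀ x : M, TangentSpace I x →L[ℝ] ℝ} {f : M → ℝ}
    (hW2 : IsSmoothOneForm I W2) (hW1 : IsSmoothOneForm I W1)
    (hf : ContMDiff I 𝓘(ℝ, ℝ) (⊤ : ℕ∞) f) :
    IsSmoothOneForm I (fun x => W2 x + f x • W1 x) := by
  rw [isSmoothOneForm_iff] at hW1 hW2 ⊢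
  intro x₀
  have : (fun x => ContinuousLinearMap.inCoordinates E (TangentSpace I) ℝ (Bundle.Trivial M ℝ)
      x₀ x x₀ x (W2 x + f x • W1 x)) =
      fun x => ContinuousLinearMap.inCoordinates E (TangentSpace I) ℝ (Bundle.Trivial M ℝ)
        x₀ x x₀ x (W2 x) +
        f x • ContinuousLinearMap.inCoordinates E (TangentSpace I) ℝ (Bundle.Trivial M ℝ)
          x₀ x x₀ x (W1 x) := by
    funext x; exact inCoordinates_add_smul I x₀ x (f x) (W1 x) (W2 x)
  rw [this]
  exact (hW2 x₀).add ((hf x₀).smul (hW1 x₀))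

lemma IsSmoothOneForm.apply_vf {W : ∀ x : M, TangentSpace I x →L[ℝ] ℝ}
    {ζ : ∀ x : M, TangentSpace I x} (hW : IsSmoothOneForm I W)
    (hζ : IsSmoothVectorField I ζ) :
    ContMDiff I 𝓘(ℝ, ℝ) (⊤ : ℕ∞) (fun x => W x (ζ x)) := by
  intro x₀
  have h : ContMDiffAt I (I.prod 𝓘(ℝ, ℝ)) (⊤ : ℕ∞)
      (fun x => TotalSpace.mk' ℝ x (W x (ζ x) : Bundle.Trivial M ℝ x)) x₀ := by
    apply ContMDiffAt.clm_apply_of_inCoordinates (IB₁ := I) (IB₂ := I) (F₁ := E)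
      (E₁ := TangentSpace I) (F₂ := ℝ) (E₂ := Bundle.Trivial M ℝ) (b₁ := id) (b₂ := id)
      (ϕ := fun x => W x) (v := fun x => ζ x)
    · exact ((contMDiffAt_hom_bundle _).1 (hW x₀)).2
    · exact hζ x₀
    · exact contMDiffAt_id
  exact (Bundle.contMDiffAt_section _).1 h


lemma isSmoothOneForm_zero : IsSmoothOneForm I (0 : ∀ x : M, TangentSpace I x →L[ℝ] ℝ) := by
  rw [isSmoothOneForm_iff]
  intro x₀
  have : (fun x : M => ContinuousLinearMap.inCoordinates E (TangentSpace I) ℝ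
      (Bundle.Trivial M ℝ) x₀ x x₀ x ((0 : ∀ x : M, TangentSpace I x →L[ℝ] ℝ) x)) =
      fun _ => (0 : E →L[ℝ] ℝ) := by
    funext x
    simp [ContinuousLinearMap.inCoordinates]
  rw [this]
  exact contMDiffAt_const

lemma IsSmoothOneForm.smul_fn {W : ∀ x : M, TangentSpace I x →L[ℝ] ℝ} {f : M → ℝ}
    (hW : IsSmoothOneForm I W) (hf : ContMDiff I 𝓘(ℝ, ℝ) (⊤ : ℕ∞) f) :
    IsSmoothOneForm I (fun x => f x • W x) := by
  rw [isSmoothOneForm_iff] at hW ⊢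
  intro x₀
  have : (fun x => ContinuousLinearMap.inCoordinates E (TangentSpace I) ℝ (Bundle.Trivial M ℝ)
      x₀ x x₀ x (f x • W x)) =
      fun x => f x • ContinuousLinearMap.inCoordinates E (TangentSpace I) ℝ (Bundle.Trivial M ℝ)
        x₀ x x₀ x (W x) := by
    funext x
    simp [ContinuousLinearMap.inCoordinates, ContinuousLinearMap.smul_comp,
      ContinuousLinearMap.comp_smul]
  rw [this]
  exact (hf x₀).smul (hW x₀)

/-- **`(G^ζ, ·)` is a group** (Section 3 of the paper): for a smooth vector field `ζ`
on a smooth manifold, the set `G^ζ` of smooth one-forms `W` with `W(ζ) > −1` everywhere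
is a group under `W²·W¹ := W² + (1 + W²(ζ))·W¹`: (i) `G^ζ` is closed under `·` and
`1 + (W²·W¹)(ζ) = (1 + W²(ζ))(1 + W¹(ζ))` pointwise; (ii) `·` is associative;
(iii) the zero one-form is a two-sided identity; (iv) `−(1 + W(ζ))⁻¹·W` is a two-sided
inverse of `W`, lying in `G^ζ`. -/
theorem oneFormMul_group (ζ : ∀ x : M, TangentSpace I x)
    (hζ : IsSmoothVectorField I ζ) :
    -- (i) closure and the pointwise formula
    (∀ W1 W2 : ∀ x : M, TangentSpace I x →L[ℝ] ℝ,
      IsSmoothOneForm I W1 → (∀ x, -1 < W1 x (ζ x)) →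
      IsSmoothOneForm I W2 → (∀ x, -1 < W2 x (ζ x)) →
        (∀ x, 1 + oneFormMul I ζ W2 W1 x (ζ x) = (1 + W2 x (ζ x)) * (1 + W1 x (ζ x)))
        ∧ IsSmoothOneForm I (oneFormMul I ζ W2 W1)
        ∧ (∀ x, -1 < oneFormMul I ζ W2 W1 x (ζ x)))
    -- (ii) associativity on `G^ζ`
    ∧ (∀ W1 W2 W3 : ∀ x : M, TangentSpace I x →L[ℝ] ℝ,
        IsSmoothOneForm I W1 → (∀ x, -1 < W1 x (ζ x)) →
        IsSmoothOneForm I W2 → (∀ x, -1 < W2 x (ζ x)) →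
        IsSmoothOneForm I W3 → (∀ x, -1 < W3 x (ζ x)) →
        oneFormMul I ζ (oneFormMul I ζ W3 W2) W1 = oneFormMul I ζ W3 (oneFormMul I ζ W2 W1))
    -- (iii) the zero one-form is a two-sided identity
    ∧ (IsSmoothOneForm I (0 : ∀ x : M, TangentSpace I x →L[ℝ] ℝ)
        ∧ (∀ x, -1 < (0 : ∀ x : M, TangentSpace I x →L[ℝ] ℝ) x (ζ x))
        ∧ ∀ W : ∀ x : M, TangentSpace I x →L[ℝ] ℝ,
            IsSmoothOneForm I W → (∀ x, -1 < W x (ζ x)) →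
            oneFormMul I ζ W 0 = W ∧ oneFormMul I ζ 0 W = W)
    -- (iv) two-sided inverses
    ∧ (∀ W : ∀ x : M, TangentSpace I x →L[ℝ] ℝ,
        IsSmoothOneForm I W → (∀ x, -1 < W x (ζ x)) →
        IsSmoothOneForm I (fun x => -(1 + W x (ζ x))⁻¹ • W x)
        ∧ (∀ x, -1 < (-(1 + W x (ζ x))⁻¹ • W x) (ζ x))
        ∧ oneFormMul I ζ W (fun x => -(1 + W x (ζ x))⁻¹ • W x) = 0
        ∧ oneFormMul I ζ (fun x => -(1 + W x (ζ x))⁻¹ • W x) W = 0)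
    -- hence `(G^ζ, ·)` is a group
    ∧ ∃ i : Group {W : ∀ x : M, TangentSpace I x →L[ℝ] ℝ //
          IsSmoothOneForm I W ∧ ∀ x, -1 < W x (ζ x)},
        ∀ A B, (i.mul A B).val = oneFormMul I ζ A.val B.val := by
  have key : ∀ (W1 W2 : ∀ x : M, TangentSpace I x →L[ℝ] ℝ) (x : M),
      1 + oneFormMul I ζ W2 W1 x (ζ x) = (1 + W2 x (ζ x)) * (1 + W1 x (ζ x)) := by
    intro W1 W2 x
    simp only [oneFormMul, ContinuousLinearMap.add_apply, ContinuousLinearMap.smul_apply,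
      smul_eq_mul]
    ring
  have h1 : ∀ W1 W2 : ∀ x : M, TangentSpace I x →L[ℝ] ℝ,
      IsSmoothOneForm I W1 → (∀ x, -1 < W1 x (ζ x)) →
      IsSmoothOneForm I W2 → (∀ x, -1 < W2 x (ζ x)) →
        (∀ x, 1 + oneFormMul I ζ W2 W1 x (ζ x) = (1 + W2 x (ζ x)) * (1 + W1 x (ζ x)))
        ∧ IsSmoothOneForm I (oneFormMul I ζ W2 W1)
        ∧ (∀ x, -1 < oneFormMul I ζ W2 W1 x (ζ x)) := by
    intro W1 W2 hW1s hW1 hW2s hW2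
    refine ⟨key W1 W2, ?_, ?_⟩
    · exact hW2s.add_smul I hW1s (contMDiff_const.add (hW2s.apply_vf I hζ))
    · intro x
      have hp : 0 < (1 + W2 x (ζ x)) * (1 + W1 x (ζ x)) :=
        mul_pos (by linarith [hW2 x]) (by linarith [hW1 x])
      linarith [key W1 W2 x]
  have h2 : ∀ W1 W2 W3 : ∀ x : M, TangentSpace I x →L[ℝ] ℝ,
      IsSmoothOneForm I W1 → (∀ x, -1 < W1 x (ζ x)) →
      IsSmoothOneForm I W2 → (∀ x, -1 < W2 x (ζ x)) →
      IsSmoothOneForm I W3 → (∀ x, -1 < W3 x (ζ x)) →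
      oneFormMul I ζ (oneFormMul I ζ W3 W2) W1 = oneFormMul I ζ W3 (oneFormMul I ζ W2 W1) := by
    intro W1 W2 W3 _ _ _ _ _ _
    funext x
    simp only [oneFormMul, ContinuousLinearMap.add_apply, ContinuousLinearMap.smul_apply,
      smul_eq_mul]
    module
  have h3 : IsSmoothOneForm I (0 : ∀ x : M, TangentSpace I x →L[ℝ] ℝ)
      ∧ (∀ x, -1 < (0 : ∀ x : M, TangentSpace I x →L[ℝ] ℝ) x (ζ x))
      ∧ ∀ W : ∀ x : M, TangentSpace I x →L[ℝ] ℝ,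
          IsSmoothOneForm I W → (∀ x, -1 < W x (ζ x)) →
          oneFormMul I ζ W 0 = W ∧ oneFormMul I ζ 0 W = W := by
    refine ⟨isSmoothOneForm_zero I, by simp, ?_⟩
    intro W _ _
    constructor
    · funext x; simp [oneFormMul]
    · funext x; simp [oneFormMul]
  have h4 : ∀ W : ∀ x : M, TangentSpace I x →L[ℝ] ℝ,
      IsSmoothOneForm I W → (∀ x, -1 < W x (ζ x)) →
      IsSmoothOneForm I (fun x => -(1 + W x (ζ x))⁻¹ • W x)
      ∧ (∀ x, -1 < (-(1 + W x (ζ x))⁻¹ • W x) (ζ x))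
      ∧ oneFormMul I ζ W (fun x => -(1 + W x (ζ x))⁻¹ • W x) = 0
      ∧ oneFormMul I ζ (fun x => -(1 + W x (ζ x))⁻¹ • W x) W = 0 := by
    intro W hWs hW
    have hpos : ∀ x, 0 < 1 + W x (ζ x) := fun x => by linarith [hW x]
    have hne : ∀ x, (1 + W x (ζ x)) ≠ 0 := fun x => ne_of_gt (hpos x)
    refine ⟨?_, ?_, ?_, ?_⟩
    · exact hWs.smul_fn I
        (((contMDiff_const.add (hWs.apply_vf I hζ)).inv₀ hne).neg)
    · intro x
      have hi : 0 < (1 + W x (ζ x))⁻¹ := inv_pos.2 (hpos x)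
      have hc : (1 + W x (ζ x))⁻¹ * (1 + W x (ζ x)) = 1 := inv_mul_cancel₀ (hne x)
      simp only [ContinuousLinearMap.smul_apply, smul_eq_mul, neg_mul]
      nlinarith [hi, hc]
    · funext x
      show W x + (1 + W x (ζ x)) • (-(1 + W x (ζ x))⁻¹ • W x) = 0
      rw [smul_smul, mul_neg, mul_inv_cancel₀ (hne x)]
      ext v; change W x v + (-1 : ℝ) * W x v = 0; ring
    · funext x
      show (-(1 + W x (ζ x))⁻¹ • W x)
          + (1 + (-(1 + W x (ζ x))⁻¹ • W x) (ζ x)) • W x = 0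
      simp only [ContinuousLinearMap.smul_apply, smul_eq_mul, neg_mul]
      match_scalars
      field_simp [hne x]
      try ring
  refine ⟨h1, h2, h3, h4, ?_⟩
  refine ⟨{
    mul := fun A B => ⟨oneFormMul I ζ A.1 B.1,
      (h1 B.1 A.1 B.2.1 B.2.2 A.2.1 A.2.2).2.1,
      (h1 B.1 A.1 B.2.1 B.2.2 A.2.1 A.2.2).2.2⟩
    one := ⟨0, h3.1, h3.2.1⟩
    inv := fun A => ⟨fun x => -(1 + A.1 x (ζ x))⁻¹ • A.1 x,
      (h4 A.1 A.2.1 A.2.2).1, (h4 A.1 A.2.1 A.2.2).2.1⟩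
    mul_assoc := fun a b c => Subtype.ext
      (h2 c.1 b.1 a.1 c.2.1 c.2.2 b.2.1 b.2.2 a.2.1 a.2.2)
    one_mul := fun a => Subtype.ext ((h3.2.2 a.1 a.2.1 a.2.2).2)
    mul_one := fun a => Subtype.ext ((h3.2.2 a.1 a.2.1 a.2.2).1)
    inv_mul_cancel := fun a => Subtype.ext ((h4 a.1 a.2.1 a.2.2).2.2.2) }, fun A B => rfl⟩

end
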